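/- arXiv:1403.7610 — 2 statements merged into one kernel-verified Lean document; each statement's English description precedes it below -/
import Mathlib

section
/- Suppose P ≠ ∅. There is no strict linear order < on the underlying set of M such that the expanded structure (M, <) is ultrahomogeneous and the age of (M, <) has the Ramsey property. -/
open FirstOrder Language Structure CategoryTheory

/-- The language `L₀` with a `2n`-ary relation symbol `E_n` for each `n ≥ 1`. -/
def L₀ : FirstOrder.Language where
  Functions := fun _ => Empty
  Relations := fun k => {n : ℕ // 0 < n ∧ k = n + n}

/-- The relation symbol `E_n`. -/
def Esymb (n : ℕ) (hn : 0 < n) : L₀.Relations (n + n) := ⟨n, hn, rfl⟩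

/-- `E_n(x̄, ȳ)` in an `L₀`-structure. -/
def ERel (M : Type*) [L₀.Structure M] (n : ℕ) (hn : 0 < n) (x y : Fin n → M) : Prop :=
  Structure.RelMap (Esymb n hn) (Fin.append x y)

/-- The defining conditions for membership in `K₀`: each `E_n` holds only on pairs of
injective `n`-tuples, is invariant under permuting the entries of each tuple separately,
and induces an equivalence relation on `n`-element subsets. -/
def IsK0Struct (C : Type*) [L₀.Structure C] : Prop :=
  ∀ (n : ℕ) (hn : 0 < n),
    (∀ x y : Fin n → C, ERel C n hn x y → Function.Injective x ∧ Function.Injective y) ∧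
    (∀ (x y : Fin n → C) (σ τ : Equiv.Perm (Fin n)),
        ERel C n hn x y → ERel C n hn (x ∘ σ) (y ∘ τ)) ∧
    (∀ x : Fin n → C, Function.Injective x → ERel C n hn x x) ∧
    (∀ x y : Fin n → C, ERel C n hn x y → ERel C n hn y x) ∧
    (∀ x y z : Fin n → C, ERel C n hn x y → ERel C n hn y z → ERel C n hn x z)

/-- The class `K₀` of finite `L₀`-structures as above. -/
def K₀ : Set (Bundled L₀.Structure) := {C | Finite C ∧ IsK0Struct C}

/-- A language with a single binary relation symbol (for a linear order). -/
def Lord : FirstOrder.Language where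
  Functions := fun _ => Empty
  Relations := fun k => PLift (k = 2)

/-- Interpret the binary relation symbol of `Lord` by a given relation `r`. -/
def ordStructure (M : Type*) (r : M → M → Prop) : Lord.Structure M where
  funMap := fun f => f.elim
  RelMap := fun {k} R v => r (v (Fin.cast R.down.symm 0)) (v (Fin.cast R.down.symm 1))

/-- The language of `L₀` together with one extra binary relation symbol `<`. -/
abbrev L₀lt : FirstOrder.Language := L₀.sum Lord

/-- The expansion of an `L₀`-structure by the binary relation `r`. -/
def expStr (M : Type*) [L₀.Structure M] (r : M → M → Prop) : L₀lt.Structure M :=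
  @Language.sumStructure L₀ Lord M _ (ordStructure M r)

/-- The Ramsey property for a class `K` of finite structures: for all `A, B ∈ K` and
`k ≥ 1` there is `C ∈ K` such that every `k`-coloring of the copies of `A` in `C` is
monochromatic on the copies of `A` inside some copy `B'` of `B` in `C`. -/
def RamseyProperty {L : FirstOrder.Language} (K : Set (Bundled L.Structure)) : Prop :=
  ∀ A B : Bundled L.Structure, A ∈ K → B ∈ K → ∀ k : ℕ, 0 < k →
    ∃ C : Bundled L.Structure, C ∈ K ∧
      ∀ χ : {S : L.Substructure C // Nonempty (S ≃[L] A)} → Fin k,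
        ∃ B' : L.Substructure C, Nonempty (B' ≃[L] B) ∧
          ∀ S T : {S : L.Substructure C // Nonempty (S ≃[L] A)},
            S.1 ≤ B' → T.1 ≤ B' → χ S = χ T

/-- The language `L_P`: a `2n`-ary symbol `E_n` for each `n ≥ 1` and a `2n`-ary symbol
`<_n` for each `n ∈ P`. -/
def LP (P : Set ℕ) : FirstOrder.Language where
  Functions := fun _ => Empty
  Relations := fun k => {n : ℕ // 0 < n ∧ k = n + n} ⊕ {n : ℕ // n ∈ P ∧ k = n + n}

/-- The symbol `E_n` of `L_P`. -/
def EsymbP (P : Set ℕ) (n : ℕ) (hn : 0 < n) : (LP P).Relations (n + n) :=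
  Sum.inl ⟨n, hn, rfl⟩

/-- The symbol `<_n` of `L_P`. -/
def LTsymbP (P : Set ℕ) (n : ℕ) (hn : n ∈ P) : (LP P).Relations (n + n) :=
  Sum.inr ⟨n, hn, rfl⟩

/-- `E_n(x̄, ȳ)` in an `L_P`-structure. -/
def ERelP (P : Set ℕ) (M : Type*) [i : (LP P).Structure M] (n : ℕ) (hn : 0 < n)
    (x y : Fin n → M) : Prop :=
  @Structure.RelMap (LP P) M i (n + n) (EsymbP P n hn) (Fin.append x y)

/-- `x̄ <_n ȳ` in an `L_P`-structure. -/
def LTRelP (P : Set ℕ) (M : Type*) [i : (LP P).Structure M] (n : ℕ) (hn : n ∈ P)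
    (x y : Fin n → M) : Prop :=
  @Structure.RelMap (LP P) M i (n + n) (LTsymbP P n hn) (Fin.append x y)

/-- The defining conditions for membership in `K_P`: the `{E_n}`-part satisfies the
`K₀`-conditions, and for `n ∈ P` the relation `<_n` holds only on injective tuples, is
`E_n`-invariant, and induces a strict linear order on `E_n`-classes. -/
def IsKPStruct (P : Set ℕ) (C : Type*) [(LP P).Structure C] : Prop :=
  (∀ (n : ℕ) (hn : 0 < n),
    (∀ x y : Fin n → C, ERelP P C n hn x y → Function.Injective x ∧ Function.Injective y) ∧
    (∀ (x y : Fin n → C) (σ τ : Equiv.Perm (Fin n)),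
        ERelP P C n hn x y → ERelP P C n hn (x ∘ σ) (y ∘ τ)) ∧
    (∀ x : Fin n → C, Function.Injective x → ERelP P C n hn x x) ∧
    (∀ x y : Fin n → C, ERelP P C n hn x y → ERelP P C n hn y x) ∧
    (∀ x y z : Fin n → C, ERelP P C n hn x y → ERelP P C n hn y z → ERelP P C n hn x z)) ∧
  (∀ (n : ℕ) (hn : n ∈ P) (hn0 : 0 < n),
    (∀ x y : Fin n → C, LTRelP P C n hn x y → Function.Injective x ∧ Function.Injective y) ∧
    (∀ x x' y y' : Fin n → C, ERelP P C n hn0 x x' → ERelP P C n hn0 y y' →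
        LTRelP P C n hn x y → LTRelP P C n hn x' y') ∧
    (∀ x y : Fin n → C, LTRelP P C n hn x y → ¬ ERelP P C n hn0 x y) ∧
    (∀ x y z : Fin n → C, LTRelP P C n hn x y → LTRelP P C n hn y z → LTRelP P C n hn x z) ∧
    (∀ x y : Fin n → C, Function.Injective x → Function.Injective y →
        ¬ ERelP P C n hn0 x y → LTRelP P C n hn x y ∨ LTRelP P C n hn y x))

/-- The class `K_P` of finite `L_P`-structures as above. -/
def KP (P : Set ℕ) : Set (Bundled (LP P).Structure) := {C | Finite C ∧ IsKPStruct P C}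

/-- The expansion of an `L_P`-structure by the binary relation `r`. -/
def expStrP (P : Set ℕ) (M : Type*) [(LP P).Structure M] (r : M → M → Prop) :
    ((LP P).sum Lord).Structure M :=
  @Language.sumStructure (LP P) Lord M _ (ordStructure M r)

/-! ### Auxiliary development -/

namespace KPAux

open Function Set

variable (P : Set ℕ)

/-- helper: composing with `Fin.append` -/
lemma comp_append {α β : Type*} {m n : ℕ} (g : α → β) (x : Fin m → α) (y : Fin n → α) :
    g ∘ Fin.append x y = Fin.append (g ∘ x) (g ∘ y) := by
  funext i
  refine Fin.addCases (fun j => ?_) (fun j => ?_) i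
  · simp [Fin.append_left]
  · simp [Fin.append_right]

/-- The pair-class relation on `Fin 4`: two injective `k`-tuples are related iff `k ≠ 2` or
their ranges are equal or complementary. -/
def EB {k : ℕ} (x y : Fin k → Fin 4) : Prop :=
  Function.Injective x ∧ Function.Injective y ∧
    (k = 2 → (Set.range x = Set.range y ∨ Set.range x = (Set.range y)ᶜ))

/-- The pair-class relation on `Fin 3`: all pair-classes are singletons. -/
def EA {k : ℕ} (x y : Fin k → Fin 3) : Prop :=
  Function.Injective x ∧ Function.Injective y ∧
    (k = 2 → Set.range x = Set.range y)

/-- The `L_P`-structure on `Fin 4`. -/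
instance VBstr : (LP P).Structure (Fin 4) where
  funMap := fun f _ => f.elim
  RelMap := fun {_} R v =>
    match R with
    | Sum.inl s => EB (fun i => v (Fin.cast s.2.2.symm (Fin.castAdd s.1 i)))
        (fun i => v (Fin.cast s.2.2.symm (Fin.natAdd s.1 i)))
    | Sum.inr _ => False

/-- The `L_P`-structure on `Fin 3`. -/
instance VAstr : (LP P).Structure (Fin 3) where
  funMap := fun f _ => f.elim
  RelMap := fun {_} R v =>
    match R with
    | Sum.inl s => EA (fun i => v (Fin.cast s.2.2.symm (Fin.castAdd s.1 i)))
        (fun i => v (Fin.cast s.2.2.symm (Fin.natAdd s.1 i)))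
    | Sum.inr _ => False

lemma VB_erel (n : ℕ) (hn : 0 < n) (x y : Fin n → Fin 4) :
    @ERelP P (Fin 4) (VBstr P) n hn x y ↔ EB x y := by
  show EB (fun i => Fin.append x y (Fin.cast rfl (Fin.castAdd n i)))
      (fun i => Fin.append x y (Fin.cast rfl (Fin.natAdd n i))) ↔ EB x y
  have h1 : (fun i => Fin.append x y (Fin.cast rfl (Fin.castAdd n i))) = x := by
    funext i
    have : Fin.cast rfl (Fin.castAdd n i) = Fin.castAdd n i := rfl
    rw [this, Fin.append_left]
  have h2 : (fun i => Fin.append x y (Fin.cast rfl (Fin.natAdd n i))) = y := by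
    funext i
    have : Fin.cast rfl (Fin.natAdd n i) = Fin.natAdd n i := rfl
    rw [this, Fin.append_right]
  rw [h1, h2]

lemma VA_erel (n : ℕ) (hn : 0 < n) (x y : Fin n → Fin 3) :
    @ERelP P (Fin 3) (VAstr P) n hn x y ↔ EA x y := by
  show EA (fun i => Fin.append x y (Fin.cast rfl (Fin.castAdd n i)))
      (fun i => Fin.append x y (Fin.cast rfl (Fin.natAdd n i))) ↔ EA x y
  have h1 : (fun i => Fin.append x y (Fin.cast rfl (Fin.castAdd n i))) = x := by
    funext i
    have : Fin.cast rfl (Fin.castAdd n i) = Fin.castAdd n i := rfl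
    rw [this, Fin.append_left]
  have h2 : (fun i => Fin.append x y (Fin.cast rfl (Fin.natAdd n i))) = y := by
    funext i
    have : Fin.cast rfl (Fin.natAdd n i) = Fin.natAdd n i := rfl
    rw [this, Fin.append_right]
  rw [h1, h2]

lemma VB_ltrel (n : ℕ) (hn : n ∈ P) (x y : Fin n → Fin 4) :
    @LTRelP P (Fin 4) (VBstr P) n hn x y ↔ False := Iff.rfl

lemma VA_ltrel (n : ℕ) (hn : n ∈ P) (x y : Fin n → Fin 3) :
    @LTRelP P (Fin 3) (VAstr P) n hn x y ↔ False := Iff.rfl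

/-- basic properties of `EB` -/
lemma EB_refl {k : ℕ} {x : Fin k → Fin 4} (hx : Function.Injective x) : EB x x :=
  ⟨hx, hx, fun _ => Or.inl rfl⟩

lemma EB_symm {k : ℕ} {x y : Fin k → Fin 4} (h : EB x y) : EB y x := by
  obtain ⟨hx, hy, h2⟩ := h
  refine ⟨hy, hx, fun hk => ?_⟩
  rcases h2 hk with h | h
  · exact Or.inl h.symm
  · right; rw [h, _root_.compl_compl]

lemma EB_trans {k : ℕ} {x y z : Fin k → Fin 4} (h : EB x y) (h' : EB y z) : EB x z := by
  obtain ⟨hx, hy, h2⟩ := h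
  obtain ⟨_, hz, h2'⟩ := h'
  refine ⟨hx, hz, fun hk => ?_⟩
  rcases h2 hk with h | h <;> rcases h2' hk with h' | h'
  · exact Or.inl (h.trans h')
  · right; rw [h, h']
  · right; rw [h, h']
  · left; rw [h, h', _root_.compl_compl]

lemma EB_perm {k : ℕ} {x y : Fin k → Fin 4} (σ τ : Equiv.Perm (Fin k)) (h : EB x y) :
    EB (x ∘ σ) (y ∘ τ) := by
  obtain ⟨hx, hy, h2⟩ := h
  refine ⟨hx.comp σ.injective, hy.comp τ.injective, fun hk => ?_⟩
  rw [Set.range_comp, Set.range_comp, σ.surjective.range_eq, τ.surjective.range_eq,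
    Set.image_univ, Set.image_univ]
  exact h2 hk

lemma EA_refl {k : ℕ} {x : Fin k → Fin 3} (hx : Function.Injective x) : EA x x :=
  ⟨hx, hx, fun _ => rfl⟩

lemma EA_symm {k : ℕ} {x y : Fin k → Fin 3} (h : EA x y) : EA y x :=
  ⟨h.2.1, h.1, fun hk => (h.2.2 hk).symm⟩

lemma EA_trans {k : ℕ} {x y z : Fin k → Fin 3} (h : EA x y) (h' : EA y z) : EA x z :=
  ⟨h.1, h'.2.1, fun hk => (h.2.2 hk).trans (h'.2.2 hk)⟩

lemma EA_perm {k : ℕ} {x y : Fin k → Fin 3} (σ τ : Equiv.Perm (Fin k)) (h : EA x y) :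
    EA (x ∘ σ) (y ∘ τ) := by
  refine ⟨h.1.comp σ.injective, h.2.1.comp τ.injective, fun hk => ?_⟩
  rw [Set.range_comp, Set.range_comp, σ.surjective.range_eq, τ.surjective.range_eq,
    Set.image_univ, Set.image_univ]
  exact h.2.2 hk

/-- `Fin 4` with `VBstr` is in `K_P`. -/
lemma VB_isKP (hP : ∀ n ∈ P, 3 ≤ n) : @IsKPStruct P (Fin 4) (VBstr P) := by
  constructor
  · intro n hn
    refine ⟨?_, ?_, ?_, ?_, ?_⟩
    · intro x y h; rw [VB_erel] at h; exact ⟨h.1, h.2.1⟩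
    · intro x y σ τ h; rw [VB_erel] at h ⊢; exact EB_perm σ τ h
    · intro x hx; rw [VB_erel]; exact EB_refl hx
    · intro x y h; rw [VB_erel] at h ⊢; exact EB_symm h
    · intro x y z h h'; rw [VB_erel] at h h' ⊢; exact EB_trans h h'
  · intro n hn hn0
    refine ⟨?_, ?_, ?_, ?_, ?_⟩
    · intro x y h; rw [VB_ltrel] at h; exact h.elim
    · intro x x' y y' _ _ h; rw [VB_ltrel] at h; exact h.elim
    · intro x y h; rw [VB_ltrel] at h; exact h.elim
    · intro x y z h; rw [VB_ltrel] at h; exact h.elim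
    · intro x y hx hy hne
      exfalso
      refine hne ?_
      rw [VB_erel]
      exact ⟨hx, hy, fun hk => absurd (hk ▸ hP n hn) (by omega)⟩

/-- `Fin 3` with `VAstr` is in `K_P`. -/
lemma VA_isKP (hP : ∀ n ∈ P, 3 ≤ n) : @IsKPStruct P (Fin 3) (VAstr P) := by
  constructor
  · intro n hn
    refine ⟨?_, ?_, ?_, ?_, ?_⟩
    · intro x y h; rw [VA_erel] at h; exact ⟨h.1, h.2.1⟩
    · intro x y σ τ h; rw [VA_erel] at h ⊢; exact EA_perm σ τ h
    · intro x hx; rw [VA_erel]; exact EA_refl hx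
    · intro x y h; rw [VA_erel] at h ⊢; exact EA_symm h
    · intro x y z h h'; rw [VA_erel] at h h' ⊢; exact EA_trans h h'
  · intro n hn hn0
    refine ⟨?_, ?_, ?_, ?_, ?_⟩
    · intro x y h; rw [VA_ltrel] at h; exact h.elim
    · intro x x' y y' _ _ h; rw [VA_ltrel] at h; exact h.elim
    · intro x y h; rw [VA_ltrel] at h; exact h.elim
    · intro x y z h; rw [VA_ltrel] at h; exact h.elim
    · intro x y hx hy hne
      exfalso
      refine hne ?_
      rw [VA_erel]
      exact ⟨hx, hy, fun hk => absurd (hk ▸ hP n hn) (by omega)⟩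

/-- Any finite structure is finitely generated. -/
lemma fg_of_finite {L : FirstOrder.Language} (N : Type*) [L.Structure N] [Finite N] :
    Structure.FG L N := by
  have : (⊤ : L.Substructure N) = Substructure.closure L (Set.univ : Set N) := by
    refine le_antisymm (fun x _ => Substructure.subset_closure (Set.mem_univ x)) le_top
  refine ⟨Set.Finite.toFinset Set.finite_univ, ?_⟩
  rw [this]
  congr 1
  simp

end KPAux
namespace KPAux

variable (P : Set ℕ)

/-- The ordered expansion of `VBstr` by the standard order of `Fin 4`. -/
instance VBO : ((LP P).sum Lord).Structure (Fin 4) :=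
  @expStrP P (Fin 4) (VBstr P) (fun i j => i < j)

/-- The ordered expansion of `VAstr` by the standard order of `Fin 3`. -/
instance VAO : ((LP P).sum Lord).Structure (Fin 3) :=
  @expStrP P (Fin 3) (VAstr P) (fun i j => i < j)

/-- The bundled ordered structures. -/
def Bbn : Bundled ((LP P).sum Lord).Structure := ⟨Fin 4, VBO P⟩
def Abn : Bundled ((LP P).sum Lord).Structure := ⟨Fin 3, VAO P⟩

/-- Relations of `VBO` under composition with a permutation of `Fin 4` (LP-part is
symmetric, order part handled separately). -/
lemma VB_perm_rel (π : Equiv.Perm (Fin 4)) {m : ℕ} (s : (LP P).Relations m)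
    (v : Fin m → Fin 4) :
    @Structure.RelMap _ _ (VBstr P) m s (⇑π ∘ v) ↔ @Structure.RelMap _ _ (VBstr P) m s v := by
  rcases s with s | s
  · show EB (⇑π ∘ fun i => v (Fin.cast s.2.2.symm (Fin.castAdd s.1 i)))
        (⇑π ∘ fun i => v (Fin.cast s.2.2.symm (Fin.natAdd s.1 i))) ↔ EB _ _
    constructor <;> intro h
    · obtain ⟨hx, hy, h2⟩ := h
      refine ⟨hx.of_comp, hy.of_comp, fun hk => ?_⟩
      rcases h2 hk with h | h
      · left
        rw [Set.range_comp, Set.range_comp] at h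
        exact Set.image_injective.2 π.injective h
      · right
        rw [Set.range_comp, Set.range_comp, ← Set.image_compl_eq π.bijective] at h
        exact Set.image_injective.2 π.injective h
    · obtain ⟨hx, hy, h2⟩ := h
      refine ⟨π.injective.comp hx, π.injective.comp hy, fun hk => ?_⟩
      rcases h2 hk with h | h
      · left; rw [Set.range_comp, Set.range_comp, h]
      · right; rw [Set.range_comp, Set.range_comp, ← Set.image_compl_eq π.bijective, h]
  · exact Iff.rfl

/-- transfer of all relations along a strictly monotone embedding `Fin 3 → Fin 4`
missing at least one point. -/
lemma iota_rel (ι : Fin 3 → Fin 4) (hmono : ∀ i j, ι i < ι j ↔ i < j)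
    (p : Fin 4) (hp : p ∉ Set.range ι) {m : ℕ} (R : ((LP P).sum Lord).Relations m)
    (x : Fin m → Fin 3) :
    @Structure.RelMap _ _ (VBO P) m R (ι ∘ x) ↔ @Structure.RelMap _ _ (VAO P) m R x := by
  have hinj : Function.Injective ι := by
    intro i j hij
    rcases lt_trichotomy i j with h | h | h
    · exact absurd ((hmono i j).2 h) (by rw [hij]; exact lt_irrefl _)
    · exact h
    · exact absurd ((hmono j i).2 h) (by rw [hij]; exact lt_irrefl _)
  rcases R with s | s
  · rcases s with s | s
    · show EB (ι ∘ fun i => x (Fin.cast s.2.2.symm (Fin.castAdd s.1 i)))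
          (ι ∘ fun i => x (Fin.cast s.2.2.symm (Fin.natAdd s.1 i))) ↔ EA _ _
      set a := fun i => x (Fin.cast s.2.2.symm (Fin.castAdd s.1 i))
      set b := fun i => x (Fin.cast s.2.2.symm (Fin.natAdd s.1 i))
      constructor <;> intro h
      · obtain ⟨hx, hy, h2⟩ := h
        refine ⟨hx.of_comp, hy.of_comp, fun hk => ?_⟩
        rcases h2 hk with h | h
        · rw [Set.range_comp, Set.range_comp] at h
          exact Set.image_injective.2 hinj h
        · exfalso
          have hpb : p ∈ (Set.range (ι ∘ b))ᶜ := by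
            intro hmem
            exact hp (by rw [Set.range_comp] at hmem; exact (Set.image_subset_range ι _) hmem)
          rw [← h] at hpb
          exact hp (by rw [Set.range_comp] at hpb; exact (Set.image_subset_range ι _) hpb)
      · obtain ⟨hx, hy, h2⟩ := h
        refine ⟨hinj.comp hx, hinj.comp hy, fun hk => ?_⟩
        left; rw [Set.range_comp, Set.range_comp, h2 hk]
    · exact Iff.rfl
  · -- order symbol
    obtain ⟨h2⟩ := s
    subst h2
    show ι (x _) < ι (x _) ↔ x _ < x _
    rw [hmono]

lemma castSucc_mono : ∀ i j : Fin 3, (Fin.castSucc i : Fin 4) < Fin.castSucc j ↔ i < j := by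
  decide

lemma succ_mono : ∀ i j : Fin 3, (Fin.succ i : Fin 4) < Fin.succ j ↔ i < j := by decide

lemma three_not_castSucc : (3 : Fin 4) ∉ Set.range (Fin.castSucc : Fin 3 → Fin 4) := by
  rintro ⟨i, hi⟩
  fin_cases i <;> exact absurd hi (by decide)

lemma zero_not_succ : (0 : Fin 4) ∉ Set.range (Fin.succ : Fin 3 → Fin 4) := by
  rintro ⟨i, hi⟩
  fin_cases i <;> exact absurd hi (by decide)

end KPAux
namespace KPAux

variable (P : Set ℕ)

/-- Any four distinct points of a strict total order can be enumerated increasingly. -/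
lemma exists_sorted {M : Type} (r : M → M → Prop) [hSTO : IsStrictTotalOrder M r]
    (f : Fin 4 → M) (hf : Function.Injective f) :
    ∃ π : Equiv.Perm (Fin 4), ∀ i j, r (f (π i)) (f (π j)) ↔ i < j := by
  classical
  letI lo : LinearOrder M := linearOrderOfSTO r
  have hr : ∀ a b : M, r a b ↔ a < b := fun a b => Iff.rfl
  set s : Finset M := (Finset.univ : Finset (Fin 4)).image f with hs
  have hcard : s.card = 4 := by
    rw [hs, Finset.card_image_of_injective _ hf, Finset.card_univ, Fintype.card_fin]
  set oi := s.orderIsoOfFin hcard with hoi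
  have hmem : ∀ j : Fin 4, ∃ i : Fin 4, f i = ↑(oi j) := by
    intro j
    have h2 : ↑(oi j) ∈ Finset.image f Finset.univ := (oi j).2
    simpa using Finset.mem_image.1 h2
  choose π0 hπ0 using hmem
  have hπ0inj : Function.Injective π0 := by
    intro i j hij
    have : (oi i : M) = (oi j : M) := by rw [← hπ0 i, ← hπ0 j, hij]
    exact oi.injective (Subtype.val_injective this)
  refine ⟨Equiv.ofBijective π0 (Finite.injective_iff_bijective.1 hπ0inj), fun i j => ?_⟩
  show r (f (π0 i)) (f (π0 j)) ↔ i < j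
  rw [hπ0 i, hπ0 j, hr]
  exact ⟨fun h => oi.lt_iff_lt.1 (Subtype.coe_lt_coe.1 h),
    fun h => Subtype.coe_lt_coe.2 (oi.lt_iff_lt.2 h)⟩

/-- There is a map `Fin 4 → M` realizing `VBO` in the ordered expansion of `M`. -/
lemma exists_g {M : Type} [iLP : (LP P).Structure M] (hage : (LP P).age M = KP P)
    (hP : ∀ n ∈ P, 3 ≤ n) (r : M → M → Prop) [hSTO : IsStrictTotalOrder M r] :
    ∃ g : Fin 4 → M, Function.Injective g ∧
      ∀ {m : ℕ} (R : ((LP P).sum Lord).Relations m) (x : Fin m → Fin 4),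
        @Structure.RelMap _ M (expStrP P M r) m R (g ∘ x) ↔
          @Structure.RelMap _ _ (VBO P) m R x := by
  have hmem : (⟨Fin 4, VBstr P⟩ : Bundled (LP P).Structure) ∈ KP P :=
    ⟨inferInstanceAs (Finite (Fin 4)), VB_isKP P hP⟩
  rw [← hage] at hmem
  obtain ⟨f⟩ := hmem.2
  obtain ⟨π, hπ⟩ := exists_sorted r (⇑f) f.injective
  refine ⟨fun i => f (π i), f.injective.comp π.injective, ?_⟩
  intro m R x
  rcases R with s | s
  · -- LP-symbol
    have h1 : @Structure.RelMap _ M (expStrP P M r) m (Sum.inl s) ((fun i => f (π i)) ∘ x)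
        = @Structure.RelMap _ M iLP m s (⇑f ∘ (⇑π ∘ x)) := rfl
    rw [h1, f.map_rel]
    exact (VB_perm_rel P π s x).trans Iff.rfl
  · -- order symbol
    obtain ⟨h2⟩ := s
    subst h2
    show r (f (π (x _))) (f (π (x _))) ↔ x _ < x _
    rw [hπ]

/-- Symmetry of `E₂` in `M`, derived from the age hypothesis. -/
lemma EM_symm {M : Type} [iLP : (LP P).Structure M] (hage : (LP P).age M = KP P)
    (hn : 0 < 2) (x y : Fin 2 → M) (h : ERelP P M 2 hn x y) : ERelP P M 2 hn y x := by
  classical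
  set s : Set M := Set.range x ∪ Set.range y with hs
  have hsfin : s.Finite := (Set.finite_range x).union (Set.finite_range y)
  haveI := hsfin.to_subtype
  set sub : (LP P).Substructure M := ⟨s, fun {n} f => f.elim⟩ with hsub
  haveI : Finite ↥sub := by exact hsfin.to_subtype
  have hmem : (⟨↥sub, Substructure.inducedStructure⟩ : Bundled (LP P).Structure)
      ∈ (LP P).age M := ⟨fg_of_finite ↥sub, ⟨sub.subtype⟩⟩
  rw [hage] at hmem
  have hKP : @IsKPStruct P ↥sub Substructure.inducedStructure := hmem.2
  have hx : ∀ i, x i ∈ sub := fun i => Or.inl (Set.mem_range_self i)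
  have hy : ∀ i, y i ∈ sub := fun i => Or.inr (Set.mem_range_self i)
  set x' : Fin 2 → ↥sub := fun i => ⟨x i, hx i⟩ with hx'
  set y' : Fin 2 → ↥sub := fun i => ⟨y i, hy i⟩ with hy'
  have key : ∀ (u v : Fin 2 → ↥sub),
      @ERelP P ↥sub Substructure.inducedStructure 2 hn u v ↔
        ERelP P M 2 hn (Subtype.val ∘ u) (Subtype.val ∘ v) := by
    intro u v
    show @Structure.RelMap _ M iLP _ (EsymbP P 2 hn) (fun i => ↑(Fin.append u v i)) ↔ _
    have : (fun i => ((Fin.append u v i : ↥sub) : M)) =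
        Fin.append (Subtype.val ∘ u) (Subtype.val ∘ v) := comp_append Subtype.val u v
    rw [this]
    exact Iff.rfl
  have h' : @ERelP P ↥sub Substructure.inducedStructure 2 hn x' y' := by
    rw [key]
    exact h
  have := (hKP.1 2 hn).2.2.2.1 x' y' h'
  rw [key] at this
  exact this

/-- Transitivity of `E₂` in `M`, derived from the age hypothesis. -/
lemma EM_trans {M : Type} [iLP : (LP P).Structure M] (hage : (LP P).age M = KP P)
    (hn : 0 < 2) (x y z : Fin 2 → M) (h : ERelP P M 2 hn x y) (h' : ERelP P M 2 hn y z) :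
    ERelP P M 2 hn x z := by
  classical
  set s : Set M := Set.range x ∪ Set.range y ∪ Set.range z with hs
  have hsfin : s.Finite :=
    ((Set.finite_range x).union (Set.finite_range y)).union (Set.finite_range z)
  set sub : (LP P).Substructure M := ⟨s, fun {n} f => f.elim⟩ with hsub
  haveI : Finite ↥sub := by exact hsfin.to_subtype
  have hmem : (⟨↥sub, Substructure.inducedStructure⟩ : Bundled (LP P).Structure)
      ∈ (LP P).age M := ⟨fg_of_finite ↥sub, ⟨sub.subtype⟩⟩
  rw [hage] at hmem
  have hKP : @IsKPStruct P ↥sub Substructure.inducedStructure := hmem.2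
  have hx : ∀ i, x i ∈ sub := fun i => Or.inl (Or.inl (Set.mem_range_self i))
  have hy : ∀ i, y i ∈ sub := fun i => Or.inl (Or.inr (Set.mem_range_self i))
  have hz : ∀ i, z i ∈ sub := fun i => Or.inr (Set.mem_range_self i)
  set x' : Fin 2 → ↥sub := fun i => ⟨x i, hx i⟩ with hx'
  set y' : Fin 2 → ↥sub := fun i => ⟨y i, hy i⟩ with hy'
  set z' : Fin 2 → ↥sub := fun i => ⟨z i, hz i⟩ with hz'
  have key : ∀ (u v : Fin 2 → ↥sub),
      @ERelP P ↥sub Substructure.inducedStructure 2 hn u v ↔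
        ERelP P M 2 hn (Subtype.val ∘ u) (Subtype.val ∘ v) := by
    intro u v
    show @Structure.RelMap _ M iLP _ (EsymbP P 2 hn) (fun i => ↑(Fin.append u v i)) ↔ _
    have : (fun i => ((Fin.append u v i : ↥sub) : M)) =
        Fin.append (Subtype.val ∘ u) (Subtype.val ∘ v) := comp_append Subtype.val u v
    rw [this]
    exact Iff.rfl
  have hxy : @ERelP P ↥sub Substructure.inducedStructure 2 hn x' y' := by rw [key]; exact h
  have hyz : @ERelP P ↥sub Substructure.inducedStructure 2 hn y' z' := by rw [key]; exact h'
  have := (hKP.1 2 hn).2.2.2.2 x' y' z' hxy hyz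
  rw [key] at this
  exact this

end KPAux
namespace KPAux

variable (P : Set ℕ)

instance : Finite ↥(Abn P) := inferInstanceAs (Finite (Fin 3))
instance : Finite ↥(Bbn P) := inferInstanceAs (Finite (Fin 4))

lemma app4 {α : Type*} (a b c d : α) : Fin.append ![a, b] ![c, d] = ![a, b, c, d] := by
  funext i
  refine Fin.addCases (fun j => ?_) (fun j => ?_) i
  · rw [Fin.append_left]; fin_cases j <;> rfl
  · rw [Fin.append_right]; fin_cases j <;> rfl

lemma pair_inj {α : Type*} {a b : α} (h : a ≠ b) : Function.Injective ![a, b] := by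
  intro i j hij
  fin_cases i <;> fin_cases j <;> simp_all

lemma range_pair {α : Type*} (a b : α) : Set.range ![a, b] = {a, b} := by
  ext x
  constructor
  · rintro ⟨i, rfl⟩
    fin_cases i
    · exact Or.inl rfl
    · exact Or.inr rfl
  · rintro (rfl | rfl)
    · exact ⟨0, rfl⟩
    · exact ⟨1, rfl⟩

/-- the two key combinatorial facts about the complementary-pair structure -/
lemma factE : EB ![(0 : Fin 4), 1] ![2, 3] := by
  refine ⟨pair_inj (by decide), pair_inj (by decide), fun _ => Or.inr ?_⟩
  rw [range_pair, range_pair]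
  ext x
  fin_cases x <;> simp <;> decide

lemma factNE : ¬ EB ![(0 : Fin 4), 1] ![1, 2] := by
  rintro ⟨-, -, h⟩
  rcases h rfl with h | h <;> rw [range_pair, range_pair] at h
  · have : (0 : Fin 4) ∈ ({1, 2} : Set (Fin 4)) := h ▸ Or.inl rfl
    rcases this with h' | h' <;> exact absurd h' (by decide)
  · have : (1 : Fin 4) ∈ ({1, 2} : Set (Fin 4))ᶜ := h ▸ Or.inr rfl
    exact this (Or.inl rfl)

lemma factRefl {i j : Fin 4} (h : i ≠ j) : EB ![i, j] ![i, j] := EB_refl (pair_inj h)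

/-- identification of a sorted triple inside a 3-element set -/
lemma triple_sort {γ : Type*} (rr : γ → γ → Prop) (hirr : ∀ a, ¬ rr a a)
    (hasym : ∀ a b, rr a b → ¬ rr b a) {u0 u1 u2 : γ}
    (h01 : rr u0 u1) (h12 : rr u1 u2) (h02 : rr u0 u2) {p1 p2 p3 : γ}
    (hp1 : p1 = u0 ∨ p1 = u1 ∨ p1 = u2) (hp2 : p2 = u0 ∨ p2 = u1 ∨ p2 = u2)
    (hp3 : p3 = u0 ∨ p3 = u1 ∨ p3 = u2) (s1 : rr p1 p2) (s2 : rr p2 p3) :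
    p1 = u0 ∧ p2 = u1 ∧ p3 = u2 := by
  rcases hp1 with rfl | rfl | rfl <;> rcases hp2 with rfl | rfl | rfl <;>
    rcases hp3 with rfl | rfl | rfl <;>
    first
      | exact ⟨rfl, rfl, rfl⟩
      | exact absurd s1 (hirr _)
      | exact absurd s2 (hirr _)
      | exact absurd s1 (hasym _ _ h01)
      | exact absurd s1 (hasym _ _ h12)
      | exact absurd s1 (hasym _ _ h02)
      | exact absurd s2 (hasym _ _ h01)
      | exact absurd s2 (hasym _ _ h12)
      | exact absurd s2 (hasym _ _ h02)

section MinMachinery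

variable {M : Type} [iLP : (LP P).Structure M]

/-- `E₂` as a relation on pairs of elements of `M`. -/
def E2M (a b u v : M) : Prop := ERelP P M 2 Nat.zero_lt_two ![a, b] ![u, v]

/-- The `E₂`-class of a pair, as a set of pairs. -/
def Zcl (u v : M) : Set (M × M) := {z | E2M P z.1 z.2 u v}

/-- `z` is the well-ordering-minimal element of the `E₂`-class of `(u,v)`. -/
def IsMn (u v : M) (z : M × M) : Prop :=
  z ∈ Zcl P u v ∧ ∀ z' ∈ Zcl P u v, ¬ WellOrderingRel z' z

lemma isMn_unique {u v : M} {z z' : M × M} (h : IsMn P u v z) (h' : IsMn P u v z') :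
    z = z' := by
  rcases trichotomous_of WellOrderingRel z z' with ht | ht | ht
  · exact absurd ht (h'.2 z h.1)
  · exact ht
  · exact absurd ht (h.2 z' h'.1)

lemma isMn_exists {u v : M} (h : (Zcl P u v).Nonempty) : ∃ z, IsMn P u v z := by
  have wf : WellFounded (@WellOrderingRel (M × M)) := IsWellFounded.wf
  exact ⟨wf.min _ h, wf.min_mem _ h, fun z' hz' => wf.not_lt_min _ hz'⟩

end MinMachinery

end KPAux
/-- if `P ≠ ∅` then there is no strict linear order `<` on the Fraïssé
limit `M` of `K_P` such that `(M, <)` is ultrahomogeneous and the age of `(M, <)` has the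
Ramsey property. -/
theorem KP_limit_no_Ramsey_order (P : Set ℕ) (hP : ∀ n ∈ P, 3 ≤ n) (hPne : P.Nonempty)
    (M : Type) [(LP P).Structure M] [Countable M]
    (hUH : (LP P).IsUltrahomogeneous M) (hage : (LP P).age M = KP P) :
    ¬ ∃ r : M → M → Prop, IsStrictTotalOrder M r ∧
        @Language.IsUltrahomogeneous ((LP P).sum Lord) M (expStrP P M r) ∧
        RamseyProperty (@Language.age ((LP P).sum Lord) M (expStrP P M r)) := by
  classical
  rintro ⟨r, hSTO, _hUH2, hRam⟩
  haveI := hSTO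
  letI iM : ((LP P).sum Lord).Structure M := expStrP P M r
  -- order facts on `M`
  have hirrM : ∀ a : M, ¬ r a a := fun a => irrefl_of r a
  have htransM : ∀ a b c : M, r a b → r b c → r a c := fun _ _ _ h h' => trans_of r h h'
  have hasymM : ∀ a b : M, r a b → ¬ r b a := fun a b h h' => hirrM a (htransM _ _ _ h h')
  -- a realization of the ordered 4-point structure in `(M, r)`
  obtain ⟨g, hginj, hg⟩ := KPAux.exists_g P hage hP r
  let gB : (KPAux.Bbn P) ↪[(LP P).sum Lord] M :=
    { toFun := g, inj' := hginj,
      map_fun' := fun {n} f x => by rcases f with e | e <;> exact e.elim,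
      map_rel' := fun {m} R x => hg R x }
  let embAB : (KPAux.Abn P) ↪[(LP P).sum Lord] (KPAux.Bbn P) :=
    { toFun := Fin.castSucc, inj' := Fin.castSucc_injective 3,
      map_fun' := fun {n} f x => by rcases f with e | e <;> exact e.elim,
      map_rel' := fun {m} R x =>
        KPAux.iota_rel P Fin.castSucc KPAux.castSucc_mono 3 KPAux.three_not_castSucc R x }
  have hA : KPAux.Abn P ∈ @Language.age ((LP P).sum Lord) M iM :=
    ⟨KPAux.fg_of_finite _, ⟨gB.comp embAB⟩⟩
  have hB : KPAux.Bbn P ∈ @Language.age ((LP P).sum Lord) M iM :=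
    ⟨KPAux.fg_of_finite _, ⟨gB⟩⟩
  obtain ⟨C, hC, hprop⟩ := hRam (KPAux.Abn P) (KPAux.Bbn P) hA hB 2 Nat.zero_lt_two
  obtain ⟨eC⟩ := hC.2
  -- the coloring
  set χ : {S : ((LP P).sum Lord).Substructure C //
      Nonempty (S ≃[(LP P).sum Lord] (KPAux.Abn P))} → Fin 2 := fun σ =>
    if (∃ p1 p2 p3 : C, p1 ∈ σ.1 ∧ p2 ∈ σ.1 ∧ p3 ∈ σ.1 ∧
        r (eC p1) (eC p2) ∧ r (eC p2) (eC p3) ∧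
        ∃ z zz : M × M, KPAux.IsMn P (eC p1) (eC p2) z ∧
          KPAux.IsMn P (eC p2) (eC p3) zz ∧ WellOrderingRel z zz) then 0 else 1
    with hχdef
  obtain ⟨B', hψ, hmono⟩ := hprop χ
  obtain ⟨ψ⟩ := hψ
  set w : Fin 4 → C := fun i => ((ψ.symm i : ↥B') : C) with hwdef
  have winj : Function.Injective w := fun i j h =>
    ψ.symm.toEquiv.injective (Subtype.coe_injective h)
  have hwB' : ∀ i, w i ∈ B' := fun i => (ψ.symm i).2
  -- transfer of relations
  have hwC : ∀ {m : ℕ} (R : ((LP P).sum Lord).Relations m) (y : Fin m → Fin 4),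
      Structure.RelMap (M := C) R (fun j => w (y j)) ↔
        @Structure.RelMap _ _ (KPAux.VBO P) m R y := fun R y => ψ.symm.map_rel R y
  have hwM : ∀ {m : ℕ} (R : ((LP P).sum Lord).Relations m) (y : Fin m → Fin 4),
      @Structure.RelMap _ M iM m R (fun j => eC (w (y j))) ↔
        @Structure.RelMap _ _ (KPAux.VBO P) m R y := fun R y =>
    (eC.map_rel R (fun j => w (y j))).trans (hwC R y)
  -- order of the w's
  have hlt : ∀ i j : Fin 4, r (eC (w i)) (eC (w j)) ↔ i < j := by
    intro i j
    exact hwM (Sum.inr ⟨rfl⟩) ![i, j]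
  -- E₂ facts about the w's
  have hpair : ∀ i j k l : Fin 4,
      KPAux.E2M P (eC (w i)) (eC (w j)) (eC (w k)) (eC (w l)) ↔ KPAux.EB ![i, j] ![k, l] := by
    intro i j k l
    have h := hwM (Sum.inl (EsymbP P 2 Nat.zero_lt_two)) (Fin.append ![i, j] ![k, l])
    have e1 : (fun t => eC (w (Fin.append ![i, j] ![k, l] t))) =
        Fin.append ![eC (w i), eC (w j)] ![eC (w k), eC (w l)] := by
      have h2 := KPAux.comp_append (fun u => eC (w u)) ![i, j] ![k, l]
      have h3 : ((fun u => eC (w u)) ∘ ![i, j]) = ![eC (w i), eC (w j)] := by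
        funext t; fin_cases t <;> rfl
      have h4 : ((fun u => eC (w u)) ∘ ![k, l]) = ![eC (w k), eC (w l)] := by
        funext t; fin_cases t <;> rfl
      rw [h3, h4] at h2
      exact h2
    rw [e1] at h
    exact h.trans (KPAux.VB_erel P 2 Nat.zero_lt_two ![i, j] ![k, l])
  have hE : KPAux.E2M P (eC (w 0)) (eC (w 1)) (eC (w 2)) (eC (w 3)) :=
    (hpair 0 1 2 3).2 KPAux.factE
  have hNE : ¬ KPAux.E2M P (eC (w 0)) (eC (w 1)) (eC (w 1)) (eC (w 2)) :=
    fun h => KPAux.factNE ((hpair 0 1 1 2).1 h)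
  have h01 : KPAux.E2M P (eC (w 0)) (eC (w 1)) (eC (w 0)) (eC (w 1)) :=
    (hpair 0 1 0 1).2 (KPAux.factRefl (by decide))
  have h12 : KPAux.E2M P (eC (w 1)) (eC (w 2)) (eC (w 1)) (eC (w 2)) :=
    (hpair 1 2 1 2).2 (KPAux.factRefl (by decide))
  -- symmetry and transitivity of E₂ in M
  have hsym : ∀ a b u v : M, KPAux.E2M P a b u v → KPAux.E2M P u v a b :=
    fun a b u v h => KPAux.EM_symm P hage Nat.zero_lt_two ![a, b] ![u, v] h
  have htr : ∀ a b c d e f : M,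
      KPAux.E2M P a b c d → KPAux.E2M P c d e f → KPAux.E2M P a b e f :=
    fun a b c d e f h h' =>
      KPAux.EM_trans P hage Nat.zero_lt_two ![a, b] ![c, d] ![e, f] h h'
  -- class equality
  have hZ : KPAux.Zcl P (eC (w 2)) (eC (w 3)) = KPAux.Zcl P (eC (w 0)) (eC (w 1)) := by
    ext z
    constructor
    · intro hz
      exact htr _ _ _ _ _ _ hz (hsym _ _ _ _ hE)
    · intro hz
      exact htr _ _ _ _ _ _ hz hE
  -- the minima
  obtain ⟨m01, hm01⟩ := KPAux.isMn_exists P (⟨(eC (w 0), eC (w 1)), h01⟩ :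
    (KPAux.Zcl P (eC (w 0)) (eC (w 1))).Nonempty)
  obtain ⟨m12, hm12⟩ := KPAux.isMn_exists P (⟨(eC (w 1), eC (w 2)), h12⟩ :
    (KPAux.Zcl P (eC (w 1)) (eC (w 2))).Nonempty)
  have hmne : m01 ≠ m12 := by
    intro h
    exact hNE (htr _ _ _ _ _ _ (hsym _ _ _ _ hm01.1) (h ▸ hm12.1))
  have hIsMn23 : ∀ z, KPAux.IsMn P (eC (w 2)) (eC (w 3)) z ↔
      KPAux.IsMn P (eC (w 0)) (eC (w 1)) z := by
    intro z
    unfold KPAux.IsMn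
    rw [hZ]
  -- the two copies of A inside B'
  let sub1 : ((LP P).sum Lord).Substructure C :=
    { carrier := {w 0, w 1, w 2},
      fun_mem := by intro n f; rcases f with e | e <;> exact e.elim }
  let sub2 : ((LP P).sum Lord).Substructure C :=
    { carrier := {w 1, w 2, w 3},
      fun_mem := by intro n f; rcases f with e | e <;> exact e.elim }
  have mem10 : w 0 ∈ sub1 := Set.mem_insert _ _
  have mem11 : w 1 ∈ sub1 := Set.mem_insert_of_mem _ (Set.mem_insert _ _)
  have mem12 : w 2 ∈ sub1 := Set.mem_insert_of_mem _ (Set.mem_insert_of_mem _ rfl)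
  have mem21 : w 1 ∈ sub2 := Set.mem_insert _ _
  have mem22 : w 2 ∈ sub2 := Set.mem_insert_of_mem _ (Set.mem_insert _ _)
  have mem23 : w 3 ∈ sub2 := Set.mem_insert_of_mem _ (Set.mem_insert_of_mem _ rfl)
  have le1 : sub1 ≤ B' := by
    intro x hx
    rcases hx with rfl | rfl | rfl
    · exact hwB' 0
    · exact hwB' 1
    · exact hwB' 2
  have le2 : sub2 ≤ B' := by
    intro x hx
    rcases hx with rfl | rfl | rfl
    · exact hwB' 1
    · exact hwB' 2
    · exact hwB' 3
  -- the isomorphisms with A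
  have iso1 : Nonempty (↥sub1 ≃[(LP P).sum Lord] ↥(KPAux.Abn P)) := by
    have hm : ∀ i : Fin 3, w (Fin.castSucc i) ∈ sub1 := by
      intro i
      fin_cases i
      · exact mem10
      · exact mem11
      · exact mem12
    let t : Fin 3 → ↥sub1 := fun i => ⟨w (Fin.castSucc i), hm i⟩
    have tinj : Function.Injective t := by
      intro i j hij
      exact Fin.castSucc_injective 3 (winj (Subtype.mk_eq_mk.1 hij))
    have tsurj : Function.Surjective t := by
      rintro ⟨x, hx⟩
      rcases hx with rfl | rfl | rfl
      · exact ⟨0, rfl⟩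
      · exact ⟨1, rfl⟩
      · exact ⟨2, rfl⟩
    refine ⟨(Language.Equiv.symm
      { toEquiv := Equiv.ofBijective t ⟨tinj, tsurj⟩
        map_fun' := fun {n} f x => by rcases f with e | e <;> exact e.elim
        map_rel' := fun {m} R x => ?_ })⟩
    exact (hwC R (fun j => Fin.castSucc (x j))).trans
      (KPAux.iota_rel P Fin.castSucc KPAux.castSucc_mono 3 KPAux.three_not_castSucc R x)
  have iso2 : Nonempty (↥sub2 ≃[(LP P).sum Lord] ↥(KPAux.Abn P)) := by
    have hm : ∀ i : Fin 3, w (Fin.succ i) ∈ sub2 := by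
      intro i
      fin_cases i
      · exact mem21
      · exact mem22
      · exact mem23
    let t : Fin 3 → ↥sub2 := fun i => ⟨w (Fin.succ i), hm i⟩
    have tinj : Function.Injective t := by
      intro i j hij
      exact Fin.succ_injective 3 (winj (Subtype.mk_eq_mk.1 hij))
    have tsurj : Function.Surjective t := by
      rintro ⟨x, hx⟩
      rcases hx with rfl | rfl | rfl
      · exact ⟨0, rfl⟩
      · exact ⟨1, rfl⟩
      · exact ⟨2, rfl⟩
    refine ⟨(Language.Equiv.symm
      { toEquiv := Equiv.ofBijective t ⟨tinj, tsurj⟩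
        map_fun' := fun {n} f x => by rcases f with e | e <;> exact e.elim
        map_rel' := fun {m} R x => ?_ })⟩
    exact (hwC R (fun j => Fin.succ (x j))).trans
      (KPAux.iota_rel P Fin.succ KPAux.succ_mono 0 KPAux.zero_not_succ R x)
  -- sortedness facts
  have hlt01 : r (eC (w 0)) (eC (w 1)) := (hlt 0 1).2 (by decide)
  have hlt12 : r (eC (w 1)) (eC (w 2)) := (hlt 1 2).2 (by decide)
  have hlt23 : r (eC (w 2)) (eC (w 3)) := (hlt 2 3).2 (by decide)
  have hlt02 : r (eC (w 0)) (eC (w 2)) := (hlt 0 2).2 (by decide)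
  have hlt13 : r (eC (w 1)) (eC (w 3)) := (hlt 1 3).2 (by decide)
  have hirrC : ∀ a : C, ¬ r (eC a) (eC a) := fun a => hirrM _
  have hasymC : ∀ a b : C, r (eC a) (eC b) → ¬ r (eC b) (eC a) := fun a b => hasymM _ _
  -- evaluating the coloring on the two copies
  have hval1 : χ ⟨sub1, iso1⟩ = if WellOrderingRel m01 m12 then 0 else 1 := by
    rw [hχdef]
    refine if_congr ?_ rfl rfl
    constructor
    · rintro ⟨p1, p2, p3, hp1, hp2, hp3, hr1, hr2, z, zz, hz, hzz, hzlt⟩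
      obtain ⟨e1, e2, e3⟩ := KPAux.triple_sort (fun a b : C => r (eC a) (eC b))
        hirrC hasymC hlt01 hlt12 hlt02 hp1 hp2 hp3 hr1 hr2
      subst e1; subst e2; subst e3
      rwa [KPAux.isMn_unique P hz hm01, KPAux.isMn_unique P hzz hm12] at hzlt
    · intro h
      exact ⟨w 0, w 1, w 2, mem10, mem11, mem12, hlt01, hlt12, m01, m12, hm01, hm12, h⟩
  have hval2 : χ ⟨sub2, iso2⟩ = if WellOrderingRel m12 m01 then 0 else 1 := by
    rw [hχdef]
    refine if_congr ?_ rfl rfl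
    constructor
    · rintro ⟨p1, p2, p3, hp1, hp2, hp3, hr1, hr2, z, zz, hz, hzz, hzlt⟩
      obtain ⟨e1, e2, e3⟩ := KPAux.triple_sort (fun a b : C => r (eC a) (eC b))
        hirrC hasymC hlt12 hlt23 hlt13 hp1 hp2 hp3 hr1 hr2
      subst e1; subst e2; subst e3
      have hzz' : KPAux.IsMn P (eC (w 0)) (eC (w 1)) zz := (hIsMn23 zz).1 hzz
      rwa [KPAux.isMn_unique P hz hm12, KPAux.isMn_unique P hzz' hm01] at hzlt
    · intro h
      exact ⟨w 1, w 2, w 3, mem21, mem22, mem23, hlt12, hlt23, m12, m01, hm12,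
        (hIsMn23 m01).2 hm01, h⟩
  have hfin := hmono ⟨sub1, iso1⟩ ⟨sub2, iso2⟩ le1 le2
  rw [hval1, hval2] at hfin
  have hWOasym : ∀ z zz : M × M, WellOrderingRel z zz → ¬ WellOrderingRel zz z := by
    intro z zz h h'
    exact (IsWellFounded.wf : WellFounded (@WellOrderingRel (M × M))).asymmetric _ _ h h'
  rcases trichotomous_of WellOrderingRel m01 m12 with ht | ht | ht
  · rw [if_pos ht, if_neg (hWOasym _ _ ht)] at hfin
    exact absurd hfin (by decide)
  · exact hmne ht
  · rw [if_neg (hWOasym _ _ ht), if_pos ht] at hfin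
    exact absurd hfin (by decide)
end

section
/- Let n ∈ P with 2n ∉ P. Then M contains a <_n-increasing sequence ā₁, ā₂, ā₃, ā₄, ā₅, ā₆ of type ℤ/4ℤ: pairwise disjoint n-tuples of pairwise distinct elements with ā₁ <_n ā₂ <_n ā₃ <_n ā₄ <_n ā₅ <_n ā₆ such that the 2n-tuples ā₁ā₂, ā₂ā₃ and ā₃ā₄ have the same isomorphism type in M, the 4n-tuples ā₁ā₂ā₃ā₄ and ā₃ā₄ā₅ā₆ have the same isomorphism type in M, and ā₁ā₂ and ā₅ā₆ are E_{2n}-equivalent but not E_{2n}-equivalent to ā₃ā₄. -/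
open FirstOrder Language Structure CategoryTheory

/-- Two `m`-tuples have the same isomorphism type in `M` when the coordinate-wise map
between them is an isomorphism of the induced substructures. -/
def SameType (P : Set ℕ) (M : Type*) [inst : (LP P).Structure M] {m : ℕ}
    (x y : Fin m → M) : Prop :=
  (∀ i j : Fin m, x i = x j ↔ y i = y j) ∧
  ∀ (k : ℕ) (R : (LP P).Relations k) (v : Fin k → Fin m),
    @Structure.RelMap (LP P) M inst k R (x ∘ v) ↔ @Structure.RelMap (LP P) M inst k R (y ∘ v)

namespace Z4aux

open Finset FirstOrder Language Structure

abbrev Dt (n : ℕ) := Fin 6 × Fin n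

def code (n : ℕ) (p : Dt n) : ℕ := p.1.val * n + p.2.val

lemma code_lt (n : ℕ) (p : Dt n) : code n p < (p.1.val + 1) * n := by
  rw [Nat.add_mul, one_mul]
  exact Nat.add_lt_add_left p.2.isLt _

lemma code_ge (n : ℕ) (p : Dt n) : p.1.val * n ≤ code n p := Nat.le_add_right _ _

def blk (n : ℕ) (i : Fin 6) : Fin n → Dt n := fun j => (i, j)

lemma blk_inj {n : ℕ} {i : Fin 6} : Function.Injective (blk n i) := by
  intro a b h
  simpa [blk, Prod.mk.injEq] using h

def cset {n k : ℕ} (w : Fin k → Dt n) : Finset ℕ := Finset.univ.image (code n ∘ w)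

lemma mem_cset {n k : ℕ} {w : Fin k → Dt n} {a : ℕ} : a ∈ cset w ↔ ∃ i, code n (w i) = a := by
  simp [cset]

def bset (n : ℕ) (i : Fin 6) : Finset ℕ := cset (blk n i)

def Aset (n : ℕ) : Finset ℕ := bset n 0 ∪ bset n 1
def Bset (n : ℕ) : Finset ℕ := bset n 4 ∪ bset n 5

def EC (n : ℕ) {k : ℕ} (x y : Fin k → Dt n) : Prop :=
  Function.Injective x ∧ Function.Injective y ∧
    (cset x = cset y ∨ (k = n + n ∧ ((cset x = Aset n ∧ cset y = Bset n) ∨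
      (cset x = Bset n ∧ cset y = Aset n))))

def LC (n : ℕ) {k : ℕ} (x y : Fin k → Dt n) : Prop :=
  Function.Injective x ∧ Function.Injective y ∧ toColex (cset x) < toColex (cset y)

def half1 {α : Type*} {m k : ℕ} (h : m = k + k) (z : Fin m → α) : Fin k → α :=
  fun i => z (Fin.cast h.symm (Fin.castAdd k i))
def half2 {α : Type*} {m k : ℕ} (h : m = k + k) (z : Fin m → α) : Fin k → α :=
  fun i => z (Fin.cast h.symm (Fin.natAdd k i))

lemma half1_append {α : Type*} {k : ℕ} (x y : Fin k → α) :
    half1 rfl (Fin.append x y) = x := by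
  funext i; exact Fin.append_left x y i
lemma half2_append {α : Type*} {k : ℕ} (x y : Fin k → α) :
    half2 rfl (Fin.append x y) = y := by
  funext i; exact Fin.append_right x y i

lemma half1_comp {α β : Type*} {m k : ℕ} (h : m = k + k) (g : α → β) (z : Fin m → α) :
    half1 h (g ∘ z) = g ∘ half1 h z := rfl
lemma half2_comp {α β : Type*} {m k : ℕ} (h : m = k + k) (g : α → β) (z : Fin m → α) :
    half2 h (g ∘ z) = g ∘ half2 h z := rfl

instance DStr (P : Set ℕ) (n : ℕ) : (LP P).Structure (Dt n) where
  funMap := fun f _ => f.elim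
  RelMap := fun {m} R z =>
    match R with
    | Sum.inl s => EC n (half1 s.2.2 z) (half2 s.2.2 z)
    | Sum.inr s => LC n (half1 s.2.2 z) (half2 s.2.2 z)

lemma relMap_inl {P : Set ℕ} {n m k : ℕ} (hk : 0 < k ∧ m = k + k) (z : Fin m → Dt n) :
    (@Structure.RelMap (LP P) (Dt n) (DStr P n) m (Sum.inl ⟨k, hk⟩) z) =
      EC n (half1 hk.2 z) (half2 hk.2 z) := rfl

lemma relMap_inr {P : Set ℕ} {n m k : ℕ} (hk : k ∈ P ∧ m = k + k) (z : Fin m → Dt n) :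
    (@Structure.RelMap (LP P) (Dt n) (DStr P n) m (Sum.inr ⟨k, hk⟩) z) =
      LC n (half1 hk.2 z) (half2 hk.2 z) := rfl

lemma ERelP_dt {P : Set ℕ} {n k : ℕ} (hk : 0 < k) (x y : Fin k → Dt n) :
    ERelP P (Dt n) k hk x y ↔ EC n x y := by
  show EC n (half1 rfl (Fin.append x y)) (half2 rfl (Fin.append x y)) ↔ EC n x y
  rw [half1_append, half2_append]

lemma LTRelP_dt {P : Set ℕ} {n k : ℕ} (hk : k ∈ P) (x y : Fin k → Dt n) :
    LTRelP P (Dt n) k hk x y ↔ LC n x y := by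
  show LC n (half1 rfl (Fin.append x y)) (half2 rfl (Fin.append x y)) ↔ LC n x y
  rw [half1_append, half2_append]

lemma code_inj {n : ℕ} : Function.Injective (code n) := by
  rintro ⟨i, j⟩ ⟨i', j'⟩ h
  have key : ∀ (p q : Dt n), p.1.val < q.1.val → code n p < code n q := by
    intro p q hpq
    exact lt_of_lt_of_le (code_lt n p)
      (le_trans (Nat.mul_le_mul hpq le_rfl) (code_ge n q))
  rcases Nat.lt_trichotomy i.val i'.val with hlt | heq | hgt
  · exact absurd h (Nat.ne_of_lt (key _ _ hlt))
  · have hi : i = i' := Fin.ext heq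
    subst hi
    have hj : j.val = j'.val := Nat.add_left_cancel h
    exact congrArg (Prod.mk i) (Fin.ext hj)
  · exact absurd h.symm (Nat.ne_of_lt (key _ _ hgt))

lemma cset_perm {n k : ℕ} (w : Fin k → Dt n) (σ : Equiv.Perm (Fin k)) :
    cset (w ∘ σ) = cset w := by
  ext a
  simp only [mem_cset, Function.comp_apply]
  constructor
  · rintro ⟨i, hi⟩; exact ⟨σ i, hi⟩
  · rintro ⟨i, hi⟩; exact ⟨σ.symm i, by simpa using hi⟩

lemma cset_append {n p q : ℕ} (u : Fin p → Dt n) (v : Fin q → Dt n) :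
    cset (Fin.append u v) = cset u ∪ cset v := by
  ext a
  simp only [mem_cset, Finset.mem_union]
  constructor
  · rintro ⟨i, hi⟩
    revert hi
    refine Fin.addCases (fun j => ?_) (fun j => ?_) i
    · intro hj; exact Or.inl ⟨j, by rwa [Fin.append_left] at hj⟩
    · intro hj; exact Or.inr ⟨j, by rwa [Fin.append_right] at hj⟩
  · rintro (⟨i, hi⟩ | ⟨i, hi⟩)
    · exact ⟨Fin.castAdd _ i, by rwa [Fin.append_left]⟩
    · exact ⟨Fin.natAdd _ i, by rwa [Fin.append_right]⟩

lemma four_n_mem_B {n : ℕ} (hn : 0 < n) : 4 * n ∈ Bset n := by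
  refine Finset.mem_union_left _ ?_
  rw [bset, mem_cset]
  refine ⟨⟨0, hn⟩, ?_⟩
  show (4 : Fin 6).val * n + 0 = 4 * n
  rw [show ((4 : Fin 6)).val = 4 from rfl]
  omega

lemma zero_mem_A {n : ℕ} (hn : 0 < n) : 0 ∈ Aset n := by
  refine Finset.mem_union_left _ ?_
  rw [bset, mem_cset]
  refine ⟨⟨0, hn⟩, ?_⟩
  show (0 : Fin 6).val * n + 0 = 0
  rw [show ((0 : Fin 6)).val = 0 from rfl]
  omega

lemma cset_ne_B {n k : ℕ} (hn : 0 < n) {w : Fin k → Dt n} (hw : ∀ i, (w i).1.val ≤ 3) :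
    cset w ≠ Bset n := by
  intro h
  have h4 := four_n_mem_B (n := n) hn
  rw [← h, mem_cset] at h4
  obtain ⟨i, hi⟩ := h4
  have h1 : code n (w i) < ((w i).1.val + 1) * n := code_lt n (w i)
  have h2 : ((w i).1.val + 1) * n ≤ 4 * n := Nat.mul_le_mul (by have := hw i; omega) le_rfl
  have h3 := lt_of_lt_of_le h1 h2
  rw [hi] at h3
  exact lt_irrefl _ h3

lemma cset_ne_A {n k : ℕ} (hn : 0 < n) {w : Fin k → Dt n} (hw : ∀ i, 1 ≤ (w i).1.val) :
    cset w ≠ Aset n := by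
  intro h
  have h0 := zero_mem_A (n := n) hn
  rw [← h, mem_cset] at h0
  obtain ⟨i, hi⟩ := h0
  have h1 : 1 * n ≤ (w i).1.val * n := Nat.mul_le_mul (hw i) le_rfl
  have h2 := le_trans h1 (code_ge n (w i))
  rw [one_mul, hi] at h2
  omega

lemma Aset_ne_Bset {n : ℕ} (hn : 0 < n) : Aset n ≠ Bset n := by
  intro h
  have h0 := zero_mem_A (n := n) hn
  rw [h, Bset, Finset.mem_union] at h0
  rcases h0 with h0 | h0
  · rw [bset, mem_cset] at h0
    obtain ⟨i, hi⟩ := h0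
    have h1 := code_ge n (blk n 4 i)
    rw [hi] at h1
    rw [show ((blk n 4 i).1).val = 4 from rfl] at h1
    omega
  · rw [bset, mem_cset] at h0
    obtain ⟨i, hi⟩ := h0
    have h1 := code_ge n (blk n 5 i)
    rw [hi] at h1
    rw [show ((blk n 5 i).1).val = 5 from rfl] at h1
    omega

lemma bset_colex_lt {n : ℕ} (hn : 0 < n) {i i' : Fin 6} (h : i.val < i'.val) :
    toColex (bset n i) < toColex (bset n i') := by
  rw [Finset.Colex.toColex_lt_toColex_iff_exists_forall_lt]
  have hbound : ∀ b ∈ bset n i, b < i'.val * n := by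
    intro b hb
    rw [bset, mem_cset] at hb
    obtain ⟨j, hj⟩ := hb
    have h1 := code_lt n (blk n i j)
    have h2 : (i.val + 1) * n ≤ i'.val * n := Nat.mul_le_mul h le_rfl
    rw [show (blk n i j).1 = i from rfl] at h1
    rw [hj] at h1
    exact lt_of_lt_of_le h1 h2
  refine ⟨i'.val * n, ?_, ?_, fun b hb _ => hbound b hb⟩
  · rw [bset, mem_cset]
    exact ⟨⟨0, hn⟩, by show i'.val * n + 0 = i'.val * n; omega⟩
  · intro hmem
    exact lt_irrefl _ (hbound _ hmem)

def sh (n : ℕ) (t : Fin 6) (p : Dt n) : Dt n := (p.1 + t, p.2)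

lemma sh_inj {n : ℕ} {t : Fin 6} : Function.Injective (sh n t) := by
  rintro ⟨a, b⟩ ⟨c, d⟩ h
  simp only [sh, Prod.mk.injEq] at h
  simp only [Prod.mk.injEq]
  exact ⟨add_right_cancel h.1, h.2⟩

lemma sh_fst {n : ℕ} {t : Fin 6} {p : Dt n} (h : p.1.val + t.val ≤ 5) :
    ((sh n t p).1).val = p.1.val + t.val := by
  show ((p.1 + t).val) = p.1.val + t.val
  rw [Fin.val_add, Nat.mod_eq_of_lt (by omega)]

lemma code_sh {n : ℕ} {t : Fin 6} {p : Dt n} (h : p.1.val + t.val ≤ 5) :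
    code n (sh n t p) = code n p + t.val * n := by
  show (sh n t p).1.val * n + p.2.val = p.1.val * n + p.2.val + t.val * n
  rw [sh_fst h, Nat.add_mul]
  ring

lemma cset_comp_add {n k : ℕ} {g : Dt n → Dt n} {c : ℕ} {w : Fin k → Dt n}
    (hg : ∀ i, code n (g (w i)) = code n (w i) + c) :
    cset (g ∘ w) = (cset w).image (· + c) := by
  ext a
  constructor
  · intro ha
    obtain ⟨i, hi⟩ := mem_cset.mp ha
    refine Finset.mem_image.mpr ⟨code n (w i), mem_cset.mpr ⟨i, rfl⟩, ?_⟩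
    rw [← hg i]; exact hi
  · intro ha
    obtain ⟨b, hb, hba⟩ := Finset.mem_image.mp ha
    obtain ⟨i, hi⟩ := mem_cset.mp hb
    refine mem_cset.mpr ⟨i, ?_⟩
    show code n (g (w i)) = a
    rw [hg i, hi]; exact hba

lemma LC_shift {n k : ℕ} {g : Dt n → Dt n} (hg : Function.Injective g) {c : ℕ}
    {w₁ w₂ : Fin k → Dt n}
    (h1 : ∀ i, code n (g (w₁ i)) = code n (w₁ i) + c)
    (h2 : ∀ i, code n (g (w₂ i)) = code n (w₂ i) + c) :
    LC n (g ∘ w₁) (g ∘ w₂) ↔ LC n w₁ w₂ := by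
  unfold LC
  rw [cset_comp_add h1, cset_comp_add h2, hg.of_comp_iff w₁, hg.of_comp_iff w₂,
    Finset.Colex.toColex_image_lt_toColex_image (f := (· + c))
      (fun a b hab => by simpa using Nat.add_lt_add_right hab c)]

lemma EC_shift {n k : ℕ} {g : Dt n → Dt n} (hg : Function.Injective g) {c : ℕ}
    {w₁ w₂ : Fin k → Dt n}
    (h1 : ∀ i, code n (g (w₁ i)) = code n (w₁ i) + c)
    (h2 : ∀ i, code n (g (w₂ i)) = code n (w₂ i) + c)
    (hB1 : cset w₁ ≠ Bset n) (hB2 : cset w₂ ≠ Bset n)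
    (hA1 : cset (g ∘ w₁) ≠ Aset n) (hA2 : cset (g ∘ w₂) ≠ Aset n) :
    EC n (g ∘ w₁) (g ∘ w₂) ↔ EC n w₁ w₂ := by
  unfold EC
  rw [hg.of_comp_iff w₁, hg.of_comp_iff w₂]
  refine and_congr Iff.rfl (and_congr Iff.rfl ⟨?_, ?_⟩)
  · rintro (h | ⟨hk, (⟨hA, hB⟩ | ⟨hB, hA⟩)⟩)
    · left
      rw [cset_comp_add h1, cset_comp_add h2] at h
      exact Finset.image_injective (add_left_injective c) h
    · exact absurd hA hA1
    · exact absurd hA hA2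
  · rintro (h | ⟨hk, (⟨hA, hB⟩ | ⟨hB, hA⟩)⟩)
    · left; rw [cset_comp_add h1, cset_comp_add h2, h]
    · exact absurd hB hB2
    · exact absurd hB hB1

lemma relMap_shift {P : Set ℕ} {n : ℕ} (hn : 0 < n) (t : Fin 6) (ht : 1 ≤ t.val)
    {m : ℕ} (w : Fin m → Dt n)
    (hw3 : ∀ i, (w i).1.val ≤ 3) (hw5 : ∀ i, (w i).1.val + t.val ≤ 5)
    (R : (LP P).Relations m) :
    Structure.RelMap R (sh n t ∘ w) ↔ Structure.RelMap R w := by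
  obtain (⟨k, hks⟩ | ⟨k, hks⟩) := R
  · rw [relMap_inl, relMap_inl, half1_comp, half2_comp]
    refine EC_shift sh_inj (fun i => code_sh (hw5 _)) (fun i => code_sh (hw5 _))
      (cset_ne_B hn (fun i => hw3 _)) (cset_ne_B hn (fun i => hw3 _)) ?_ ?_
    · refine cset_ne_A hn (fun i => ?_)
      have hs := sh_fst (n := n) (t := t) (p := half1 hks.2 w i) (hw5 _)
      rw [Function.comp_apply, hs]
      omega
    · refine cset_ne_A hn (fun i => ?_)
      have hs := sh_fst (n := n) (t := t) (p := half2 hks.2 w i) (hw5 _)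
      rw [Function.comp_apply, hs]
      omega
  · rw [relMap_inr, relMap_inr, half1_comp, half2_comp]
    exact LC_shift sh_inj (fun i => code_sh (hw5 _)) (fun i => code_sh (hw5 _))

lemma comp_append' {α β : Type*} {p q : ℕ} (g : α → β) (u : Fin p → α) (v : Fin q → α) :
    g ∘ Fin.append u v = Fin.append (g ∘ u) (g ∘ v) := by
  funext i
  induction i using Fin.addCases with
  | left j => simp [Fin.append_left]
  | right j => simp [Fin.append_right]

lemma inj_append {α : Type*} {p q : ℕ} {u : Fin p → α} {v : Fin q → α}
    (hu : Function.Injective u) (hv : Function.Injective v) (huv : ∀ i j, u i ≠ v j) :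
    Function.Injective (Fin.append u v) := by
  intro a b h
  revert h
  induction a using Fin.addCases with
  | left i =>
    induction b using Fin.addCases with
    | left j =>
      intro h
      rw [Fin.append_left, Fin.append_left] at h
      rw [hu h]
    | right j =>
      intro h
      rw [Fin.append_left, Fin.append_right] at h
      exact absurd h (huv i j)
  | right i =>
    induction b using Fin.addCases with
    | left j =>
      intro h
      rw [Fin.append_right, Fin.append_left] at h
      exact absurd h.symm (huv j i)
    | right j =>
      intro h
      rw [Fin.append_right, Fin.append_right] at h
      rw [hv h]

lemma blk_append_inj {n : ℕ} {i i' : Fin 6} (h : i ≠ i') :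
    Function.Injective (Fin.append (blk n i) (blk n i')) :=
  inj_append blk_inj blk_inj (fun a b hab => h (congrArg Prod.fst hab))

lemma fst_append2 {n : ℕ} {i i' : Fin 6} (q : Fin (n + n)) :
    (Fin.append (blk n i) (blk n i') q).1 = i ∨ (Fin.append (blk n i) (blk n i') q).1 = i' := by
  induction q using Fin.addCases with
  | left j => left; rw [Fin.append_left]; rfl
  | right j => right; rw [Fin.append_right]; rfl

lemma fst_append4 {n : ℕ} {i1 i2 i3 i4 : Fin 6} (q : Fin ((n + n) + (n + n))) :
    (Fin.append (Fin.append (blk n i1) (blk n i2)) (Fin.append (blk n i3) (blk n i4)) q).1 = i1 ∨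
    (Fin.append (Fin.append (blk n i1) (blk n i2)) (Fin.append (blk n i3) (blk n i4)) q).1 = i2 ∨
    (Fin.append (Fin.append (blk n i1) (blk n i2)) (Fin.append (blk n i3) (blk n i4)) q).1 = i3 ∨
    (Fin.append (Fin.append (blk n i1) (blk n i2)) (Fin.append (blk n i3) (blk n i4)) q).1 = i4 := by
  induction q using Fin.addCases with
  | left j =>
    rw [Fin.append_left]
    rcases fst_append2 j with h | h
    · exact Or.inl h
    · exact Or.inr (Or.inl h)
  | right j =>
    rw [Fin.append_right]
    rcases fst_append2 j with h | h
    · exact Or.inr (Or.inr (Or.inl h))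
    · exact Or.inr (Or.inr (Or.inr h))

lemma quad_inj {n : ℕ} {i1 i2 i3 i4 : Fin 6} (h12 : i1 ≠ i2) (h34 : i3 ≠ i4)
    (h13 : i1 ≠ i3) (h14 : i1 ≠ i4) (h23 : i2 ≠ i3) (h24 : i2 ≠ i4) :
    Function.Injective
      (Fin.append (Fin.append (blk n i1) (blk n i2)) (Fin.append (blk n i3) (blk n i4))) := by
  refine inj_append (blk_append_inj h12) (blk_append_inj h34) (fun a b hab => ?_)
  have hf := congrArg Prod.fst hab
  rcases fst_append2 a with h | h <;> rcases fst_append2 b with h' | h' <;>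
    rw [h, h'] at hf
  · exact h13 hf
  · exact h14 hf
  · exact h23 hf
  · exact h24 hf

lemma isKP {P : Set ℕ} {n : ℕ} (hn : 0 < n) (h2n : n + n ∉ P) : IsKPStruct P (Dt n) := by
  constructor
  · intro k hk
    simp only [ERelP_dt]
    refine ⟨fun x y h => ⟨h.1, h.2.1⟩, ?_, ?_, ?_, ?_⟩
    · rintro x y σ τ ⟨hx, hy, hc⟩
      exact ⟨hx.comp σ.injective, hy.comp τ.injective, by rwa [cset_perm, cset_perm]⟩
    · exact fun x hx => ⟨hx, hx, Or.inl rfl⟩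
    · rintro x y ⟨hx, hy, hc⟩
      refine ⟨hy, hx, ?_⟩
      rcases hc with h | ⟨hk', h | h⟩
      · exact Or.inl h.symm
      · exact Or.inr ⟨hk', Or.inr ⟨h.2, h.1⟩⟩
      · exact Or.inr ⟨hk', Or.inl ⟨h.2, h.1⟩⟩
    · rintro x y z ⟨hx, hy, hc⟩ ⟨_, hz, hc'⟩
      refine ⟨hx, hz, ?_⟩
      rcases hc with h | ⟨hk', h | h⟩ <;> rcases hc' with h' | ⟨hk'', h' | h'⟩
      · exact Or.inl (h.trans h')
      · exact Or.inr ⟨hk'', Or.inl ⟨h.trans h'.1, h'.2⟩⟩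
      · exact Or.inr ⟨hk'', Or.inr ⟨h.trans h'.1, h'.2⟩⟩
      · exact Or.inr ⟨hk', Or.inl ⟨h.1, h'.symm.trans h.2⟩⟩
      · exact absurd (h'.1.symm.trans h.2) (Aset_ne_Bset hn)
      · exact Or.inl (h.1.trans h'.2.symm)
      · exact Or.inr ⟨hk', Or.inr ⟨h.1, h'.symm.trans h.2⟩⟩
      · exact Or.inl (h.1.trans h'.2.symm)
      · exact absurd (h'.1.symm.trans h.2) (fun hh => Aset_ne_Bset hn hh.symm)
  · intro k hkP hk0
    simp only [ERelP_dt, LTRelP_dt]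
    have hkE : k ≠ n + n := fun h => h2n (h ▸ hkP)
    refine ⟨fun x y h => ⟨h.1, h.2.1⟩, ?_, ?_, ?_, ?_⟩
    · rintro x x' y y' ⟨hx, hx', hcx⟩ ⟨hy, hy', hcy⟩ ⟨_, _, hlt⟩
      have ex : cset x = cset x' := by
        rcases hcx with h | ⟨hk', _⟩
        · exact h
        · exact absurd hk' hkE
      have ey : cset y = cset y' := by
        rcases hcy with h | ⟨hk', _⟩
        · exact h
        · exact absurd hk' hkE
      exact ⟨hx', hy', by rwa [← ex, ← ey]⟩
    · rintro x y ⟨hx, hy, hlt⟩ ⟨_, _, hc⟩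
      rcases hc with h | ⟨hk', _⟩
      · rw [h] at hlt
        exact lt_irrefl _ hlt
      · exact hkE hk'
    · rintro x y z ⟨hx, hy, h1⟩ ⟨_, hz, h2⟩
      exact ⟨hx, hz, h1.trans h2⟩
    · intro x y hx hy hne
      have hc : cset x ≠ cset y := fun h => hne ⟨hx, hy, Or.inl h⟩
      rcases lt_or_gt_of_ne (toColex_inj.not.mpr hc) with h | h
      · exact Or.inl ⟨hx, hy, h⟩
      · exact Or.inr ⟨hy, hx, h⟩

lemma sameType_shift {P : Set ℕ} {n : ℕ} (hn : 0 < n) {M : Type*} [(LP P).Structure M]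
    (f : Dt n ↪[LP P] M) (t : Fin 6) (ht : 1 ≤ t.val) {m : ℕ} (w : Fin m → Dt n)
    (hw : Function.Injective w) (hw3 : ∀ i, (w i).1.val ≤ 3)
    (hw5 : ∀ i, (w i).1.val + t.val ≤ 5) :
    SameType P M (⇑f ∘ w) (⇑f ∘ (sh n t ∘ w)) := by
  constructor
  · intro i j
    rw [(f.injective.comp hw).eq_iff, (f.injective.comp (sh_inj.comp hw)).eq_iff]
  · intro k R v
    have e1 : (⇑f ∘ w) ∘ v = ⇑f ∘ (w ∘ v) := rfl
    have e2 : (⇑f ∘ (sh n t ∘ w)) ∘ v = ⇑f ∘ (sh n t ∘ (w ∘ v)) := rfl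
    rw [e1, e2, Embedding.map_rel, Embedding.map_rel]
    exact (relMap_shift hn t ht (w ∘ v) (fun i => hw3 _) (fun i => hw5 _) R).symm

end Z4aux

open Z4aux

/-- for `n ∈ P` with `2n ∉ P`, the Fraïssé limit `M` of `K_P` contains a
`<_n`-increasing sequence `ā₁, …, ā₆` of type `ℤ/4ℤ`. -/
theorem KP_limit_Z4_sequence (P : Set ℕ) (hP : ∀ n ∈ P, 3 ≤ n)
    (M : Type) [(LP P).Structure M] [Countable M]
    (hUH : (LP P).IsUltrahomogeneous M) (hage : (LP P).age M = KP P)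
    (n : ℕ) (hnP : n ∈ P) (h2n : n + n ∉ P) (hn0 : 0 < n) :
    ∃ a : Fin 6 → (Fin n → M),
      -- pairwise disjoint injective n-tuples
      (∀ i, Function.Injective (a i)) ∧
      (∀ i j, i ≠ j → Disjoint (Set.range (a i)) (Set.range (a j))) ∧
      -- ā₁ <_n ā₂ <_n ā₃ <_n ā₄ <_n ā₅ <_n ā₆
      (∀ i : Fin 5, LTRelP P M n hnP (a i.castSucc) (a i.succ)) ∧
      -- ā₁ā₂, ā₂ā₃ and ā₃ā₄ have the same isomorphism type in M
      SameType P M (Fin.append (a 0) (a 1)) (Fin.append (a 1) (a 2)) ∧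
      SameType P M (Fin.append (a 1) (a 2)) (Fin.append (a 2) (a 3)) ∧
      -- ā₁ā₂ā₃ā₄ and ā₃ā₄ā₅ā₆ have the same isomorphism type in M
      SameType P M (Fin.append (Fin.append (a 0) (a 1)) (Fin.append (a 2) (a 3)))
        (Fin.append (Fin.append (a 2) (a 3)) (Fin.append (a 4) (a 5))) ∧
      -- ā₁ā₂ and ā₅ā₆ are E_{2n}-equivalent, but not E_{2n}-equivalent to ā₃ā₄
      ERelP P M (n + n) (Nat.add_pos_left hn0 n)
        (Fin.append (a 0) (a 1)) (Fin.append (a 4) (a 5)) ∧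
      ¬ ERelP P M (n + n) (Nat.add_pos_left hn0 n)
        (Fin.append (a 0) (a 1)) (Fin.append (a 2) (a 3)) := by
  classical
  -- get an embedding of our finite structure into M
  have hmem : (⟨Dt n, DStr P n⟩ : Bundled (LP P).Structure) ∈ KP P :=
    ⟨(inferInstance : Finite (Dt n)), isKP hn0 h2n⟩
  rw [← hage] at hmem
  obtain ⟨-, ⟨f⟩⟩ := hmem
  have hER : ∀ (k : ℕ) (hk : 0 < k) (x y : Fin k → Dt n),
      ERelP P M k hk (⇑f ∘ x) (⇑f ∘ y) ↔ EC n x y := by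
    intro k hk x y
    unfold ERelP
    rw [← comp_append' ⇑f x y, Embedding.map_rel]
    exact ERelP_dt hk x y
  have hLT : ∀ (k : ℕ) (hk : k ∈ P) (x y : Fin k → Dt n),
      LTRelP P M k hk (⇑f ∘ x) (⇑f ∘ y) ↔ LC n x y := by
    intro k hk x y
    unfold LTRelP
    rw [← comp_append' ⇑f x y, Embedding.map_rel]
    exact LTRelP_dt hk x y
  refine ⟨fun i => ⇑f ∘ blk n i, ?_, ?_, ?_, ?_, ?_, ?_, ?_, ?_⟩
  · exact fun i => f.injective.comp blk_inj
  · intro i j hij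
    rw [Set.disjoint_left]
    rintro x ⟨u, hu⟩ ⟨v, hv⟩
    exact hij (congrArg Prod.fst (f.injective (hu.trans hv.symm)))
  · intro i
    rw [hLT n hnP]
    refine ⟨blk_inj, blk_inj, ?_⟩
    exact bset_colex_lt hn0 (by simp only [Fin.coe_castSucc, Fin.val_succ]; omega)
  · -- SameType 01 ~ 12
    have hs := sameType_shift hn0 f 1 (by decide) (Fin.append (blk n 0) (blk n 1))
      (blk_append_inj (by decide))
      (fun q => by rcases fst_append2 q with h | h <;> rw [h] <;> decide)
      (fun q => by rcases fst_append2 q with h | h <;> rw [h] <;> decide)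
    have esh : sh n 1 ∘ Fin.append (blk n 0) (blk n 1)
        = Fin.append (blk n 1) (blk n 2) := by
      rw [comp_append' (sh n 1) (blk n 0) (blk n 1)]
      rw [show sh n 1 ∘ blk n 0 = blk n 1 from rfl, show sh n 1 ∘ blk n 1 = blk n 2 from rfl]
    rw [esh] at hs
    rw [← comp_append' ⇑f (blk n 0) (blk n 1), ← comp_append' ⇑f (blk n 1) (blk n 2)]
    exact hs
  · -- SameType 12 ~ 23
    have hs := sameType_shift hn0 f 1 (by decide) (Fin.append (blk n 1) (blk n 2))
      (blk_append_inj (by decide))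
      (fun q => by rcases fst_append2 q with h | h <;> rw [h] <;> decide)
      (fun q => by rcases fst_append2 q with h | h <;> rw [h] <;> decide)
    have esh : sh n 1 ∘ Fin.append (blk n 1) (blk n 2)
        = Fin.append (blk n 2) (blk n 3) := by
      rw [comp_append' (sh n 1) (blk n 1) (blk n 2)]
      rw [show sh n 1 ∘ blk n 1 = blk n 2 from rfl, show sh n 1 ∘ blk n 2 = blk n 3 from rfl]
    rw [esh] at hs
    rw [← comp_append' ⇑f (blk n 1) (blk n 2), ← comp_append' ⇑f (blk n 2) (blk n 3)]
    exact hs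
  · -- SameType 0123 ~ 2345
    have hs := sameType_shift hn0 f 2 (by decide)
      (Fin.append (Fin.append (blk n 0) (blk n 1)) (Fin.append (blk n 2) (blk n 3)))
      (quad_inj (by decide) (by decide) (by decide) (by decide) (by decide) (by decide))
      (fun q => by
        rcases fst_append4 q with h | h | h | h <;> rw [h] <;> decide)
      (fun q => by
        rcases fst_append4 q with h | h | h | h <;> rw [h] <;> decide)
    have esh : sh n 2 ∘ Fin.append (Fin.append (blk n 0) (blk n 1))
          (Fin.append (blk n 2) (blk n 3))
        = Fin.append (Fin.append (blk n 2) (blk n 3)) (Fin.append (blk n 4) (blk n 5)) := by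
      rw [comp_append' (sh n 2) (Fin.append (blk n 0) (blk n 1)) (Fin.append (blk n 2) (blk n 3)),
        comp_append' (sh n 2) (blk n 0) (blk n 1), comp_append' (sh n 2) (blk n 2) (blk n 3)]
      rw [show sh n 2 ∘ blk n 0 = blk n 2 from rfl, show sh n 2 ∘ blk n 1 = blk n 3 from rfl,
        show sh n 2 ∘ blk n 2 = blk n 4 from rfl, show sh n 2 ∘ blk n 3 = blk n 5 from rfl]
    rw [esh] at hs
    rw [← comp_append' ⇑f (blk n 0) (blk n 1), ← comp_append' ⇑f (blk n 2) (blk n 3),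
      ← comp_append' ⇑f (blk n 4) (blk n 5),
      ← comp_append' ⇑f (Fin.append (blk n 0) (blk n 1)) (Fin.append (blk n 2) (blk n 3)),
      ← comp_append' ⇑f (Fin.append (blk n 2) (blk n 3)) (Fin.append (blk n 4) (blk n 5))]
    exact hs
  · -- E_{2n}(a01, a45)
    rw [← comp_append' ⇑f (blk n 0) (blk n 1), ← comp_append' ⇑f (blk n 4) (blk n 5),
      hER (n + n) (Nat.add_pos_left hn0 n)]
    refine ⟨blk_append_inj (by decide), blk_append_inj (by decide), Or.inr ⟨rfl, Or.inl ⟨?_, ?_⟩⟩⟩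
    · exact cset_append (blk n 0) (blk n 1)
    · exact cset_append (blk n 4) (blk n 5)
  · -- ¬ E_{2n}(a01, a23)
    rw [← comp_append' ⇑f (blk n 0) (blk n 1), ← comp_append' ⇑f (blk n 2) (blk n 3),
      hER (n + n) (Nat.add_pos_left hn0 n)]
    rintro ⟨-, -, hc⟩
    have hA01 : cset (Fin.append (blk n 0) (blk n 1)) = Aset n := cset_append (blk n 0) (blk n 1)
    have hA23 : cset (Fin.append (blk n 2) (blk n 3)) ≠ Aset n :=
      cset_ne_A hn0 (fun q => by rcases fst_append2 q with h | h <;> rw [h] <;> decide)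
    have hB01 : cset (Fin.append (blk n 0) (blk n 1)) ≠ Bset n :=
      cset_ne_B hn0 (fun q => by rcases fst_append2 q with h | h <;> rw [h] <;> decide)
    have hB23 : cset (Fin.append (blk n 2) (blk n 3)) ≠ Bset n :=
      cset_ne_B hn0 (fun q => by rcases fst_append2 q with h | h <;> rw [h] <;> decide)
    rcases hc with h | ⟨-, ⟨hA, hB⟩ | ⟨hB, hA⟩⟩
    · exact hA23 (h.symm.trans hA01)
    · exact hB23 hB
    · exact hB01 hB
end
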